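/- Let q be a positive definite quadratic form on ℝⁿ, n ≥ 2, and β a linear form with ‖β‖_q < 1. Suppose e is a quadratic form on ℝⁿ and P₂, P₃, P₄ are polynomial functions such that (1/4)ν·e(y)² + (q(y) - β(y)²)·(P₂(y) + 2β(y)P₃(y) + (q(y) + 3β(y)²)P₄(y)) = 0 for all y, where ν ≠ 0 is a real constant. Then there exists a real constant c such that e(y) = 2c(q(y) - β(y)²) for all y. -/

import Mathlib

open Polynomial

/-- Algebraic core of Lemma 3.1: if `ν ≠ 0` and
`(1/4)ν e(y)² + (Q(y) - β(y)²)(P₂(y) + 2β(y)P₃(y) + (Q(y) + 3β(y)²)P₄(y)) = 0`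
for all `y`, with `Q` positive definite, `β` a linear form of `Q`-norm `< 1`, and
`e` a quadratic form, `P₂, P₃, P₄` polynomial functions, then
`e = 2c(Q - β²)` for some constant `c`. -/
theorem stmt3 (n : ℕ) (hn : 2 ≤ n) (Q : QuadraticForm ℝ (Fin n → ℝ)) (hQ : Q.PosDef)
    (β : (Fin n → ℝ) →ₗ[ℝ] ℝ)
    (hβ : ∀ y : Fin n → ℝ, y ≠ 0 → (β y) ^ 2 < Q y)
    (e : QuadraticForm ℝ (Fin n → ℝ))
    (P₂ P₃ P₄ : MvPolynomial (Fin n) ℝ) (ν : ℝ) (hν : ν ≠ 0)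
    (h : ∀ y : Fin n → ℝ,
      (1 / 4) * ν * (e y) ^ 2 +
        (Q y - (β y) ^ 2) *
          (MvPolynomial.eval y P₂ + 2 * β y * MvPolynomial.eval y P₃ +
            (Q y + 3 * (β y) ^ 2) * MvPolynomial.eval y P₄) = 0) :
    ∃ c : ℝ, ∀ y : Fin n → ℝ, e y = 2 * c * (Q y - (β y) ^ 2) := by
  classical
  -- the positive definite quadratic function g = Q - β²
  set g : (Fin n → ℝ) → ℝ := fun y => Q y - (β y) ^ 2 with hg
  have hgpos : ∀ y : Fin n → ℝ, y ≠ 0 → 0 < g y := fun y hy => sub_pos.2 (hβ y hy)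
  -- expansion of quadratic forms along lines
  have quadline : ∀ (φ : QuadraticForm ℝ (Fin n → ℝ)) (u v : Fin n → ℝ) (s : ℝ),
      φ (s • u + v) = φ u * s ^ 2 + QuadraticMap.polar φ u v * s + φ v := by
    intro φ u v s
    rw [QuadraticMap.map_add ⇑φ (s • u) v, QuadraticMap.map_smul,
      QuadraticMap.polar_smul_left]
    simp [smul_eq_mul]; ring
  have betaline : ∀ (u v : Fin n → ℝ) (s : ℝ), β (s • u + v) = β u * s + β v := by
    intro u v s; simp [map_add, map_smul, smul_eq_mul]; ring
  have gline : ∀ (u v : Fin n → ℝ) (s : ℝ),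
      g (s • u + v) = g u * s ^ 2 +
        (QuadraticMap.polar Q u v - 2 * β u * β v) * s + g v := by
    intro u v s
    simp only [hg, quadline Q u v s, betaline u v s]
    ring
  -- the key two-point relation
  have key2 : ∀ u v : Fin n → ℝ, u ≠ 0 → (∀ s : ℝ, s • u + v ≠ 0) →
      g u * e v = e u * g v := by
    intro u v hu huv
    -- line substitution ring hom
    set S : MvPolynomial (Fin n) ℝ →+* ℝ[X] :=
      MvPolynomial.eval₂Hom (Polynomial.C : ℝ →+* ℝ[X])
        (fun i => Polynomial.C (u i) * Polynomial.X + Polynomial.C (v i)) with hSdef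
    have hS : ∀ (p : MvPolynomial (Fin n) ℝ) (s : ℝ),
        (S p).eval s = MvPolynomial.eval (s • u + v) p := by
      intro p s
      induction p using MvPolynomial.induction_on with
      | C a => simp [hSdef]
      | add p q hp hq =>
          simp [hSdef, MvPolynomial.coe_eval₂Hom] at hp hq ⊢; simp [hp, hq]
      | mul_X p i hp =>
          simp [hSdef, MvPolynomial.coe_eval₂Hom] at hp ⊢; rw [hp]; ring
    set a : ℝ := g u with hadef
    set b : ℝ := QuadraticMap.polar Q u v - 2 * β u * β v with hbdef
    set c : ℝ := g v with hcdef
    set d0 : ℝ := e u with hd0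
    set d1 : ℝ := QuadraticMap.polar e u v with hd1
    set d2 : ℝ := e v with hd2
    have ha : 0 < a := hgpos u hu
    set Ep : ℝ[X] := C d0 * X ^ 2 + C d1 * X + C d2 with hEp
    set Gp : ℝ[X] := C a * X ^ 2 + C b * X + C c with hGp
    set Bp : ℝ[X] := C (β u) * X + C (β v) with hBp
    set Qp : ℝ[X] := C (Q u) * X ^ 2 + C (QuadraticMap.polar Q u v) * X + C (Q v) with hQp
    set Rp : ℝ[X] := S P₂ + 2 * Bp * (S P₃) + (Qp + 3 * Bp ^ 2) * (S P₄) with hRp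
    have hEe : ∀ s : ℝ, Ep.eval s = e (s • u + v) := by
      intro s; rw [quadline e u v s]; simp [hEp]; rfl
    have hGe : ∀ s : ℝ, Gp.eval s = g (s • u + v) := by
      intro s; rw [gline u v s]; simp [hGp]; rfl
    have hQe : ∀ s : ℝ, Qp.eval s = Q (s • u + v) := by
      intro s; rw [quadline Q u v s]; simp [hQp]
    have hBe : ∀ s : ℝ, Bp.eval s = β (s • u + v) := by
      intro s; rw [betaline u v s]; simp [hBp]
    have hP : C (1 / 4 * ν) * Ep ^ 2 + Gp * Rp = 0 := by
      apply Polynomial.funext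
      intro s
      have hy := h (s • u + v)
      simp only [eval_add, eval_mul, eval_pow, eval_C, eval_zero, hEe, hGe, hQe, hBe, hS,
        hRp, eval_ofNat]
      push_cast
      linear_combination hy
    have hid : C (1 / 4 * ν) * Ep ^ 2 = -(Gp * Rp) := eq_neg_of_add_eq_zero_left hP
    -- pass to ℂ
    set f : ℝ →+* ℂ := (algebraMap ℝ ℂ) with hf
    have hmG : Gp.map f = C (a : ℂ) * X ^ 2 + C (b : ℂ) * X + C (c : ℂ) := by
      simp [hGp, Polynomial.map_add, Polynomial.map_mul, Polynomial.map_pow, hf]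
    have hmE : Ep.map f = C (d0 : ℂ) * X ^ 2 + C (d1 : ℂ) * X + C (d2 : ℂ) := by
      simp [hEp, Polynomial.map_add, Polynomial.map_mul, Polynomial.map_pow, hf]
    have hdeg : 0 < (Gp.map f).degree := by
      rw [hmG, Polynomial.degree_quadratic (by exact_mod_cast ha.ne')]
      decide
    obtain ⟨z, hz⟩ := Complex.exists_root hdeg
    have hGz : (a : ℂ) * z ^ 2 + (b : ℂ) * z + (c : ℂ) = 0 := by
      have := hz
      rw [Polynomial.IsRoot, hmG] at this
      simpa using this
    -- E vanishes at z too
    have hEz : (d0 : ℂ) * z ^ 2 + (d1 : ℂ) * z + (d2 : ℂ) = 0 := by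
      have h1 := congrArg (fun p : ℝ[X] => Polynomial.eval z (p.map f)) hid
      simp only [Polynomial.map_mul, Polynomial.map_pow, Polynomial.map_C,
        Polynomial.map_neg, Polynomial.eval_mul, Polynomial.eval_pow, Polynomial.eval_C,
        Polynomial.eval_neg] at h1
      rw [hz.eq_zero] at h1 -- ?? hz is root of Gp.map f
      have h2 : ((1 / 4 * ν : ℝ) : ℂ) * (Polynomial.eval z (Ep.map f)) ^ 2 = 0 := by
        simpa using h1
      have h3 : (Polynomial.eval z (Ep.map f)) = 0 := by
        have hν' : ((1 / 4 * ν : ℝ) : ℂ) ≠ 0 := by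
          simp [hν]
        have := (mul_eq_zero.1 h2).resolve_left hν'
        exact pow_eq_zero_iff (by norm_num) |>.1 this
      rw [hmE] at h3
      simpa using h3
    -- z is not real
    have him : z.im ≠ 0 := by
      intro h0
      have hzre : z = ((z.re : ℝ) : ℂ) := Complex.ext rfl (by simp [h0])
      rw [hzre] at hGz
      have : ((a * z.re ^ 2 + b * z.re + c : ℝ) : ℂ) = 0 := by push_cast; linear_combination hGz
      have h4 : a * z.re ^ 2 + b * z.re + c = 0 := by exact_mod_cast this
      have h5 : 0 < g (z.re • u + v) := hgpos _ (huv z.re)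
      rw [gline u v z.re] at h5
      rw [← hadef, ← hbdef, ← hcdef] at h5
      linarith
    -- eliminate z²
    have hlin : ((a * d1 - d0 * b : ℝ) : ℂ) * z + ((a * d2 - d0 * c : ℝ) : ℂ) = 0 := by
      push_cast
      linear_combination (a : ℂ) * hEz - (d0 : ℂ) * hGz
    have hA : a * d1 - d0 * b = 0 := by
      have h6 := congrArg Complex.im hlin
      simp [Complex.add_im, Complex.mul_im] at h6
      rcases h6 with h6 | h6
      · exact h6
      · exact absurd h6 him
    have hB : a * d2 - d0 * c = 0 := by
      rw [hA] at hlin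
      simp at hlin
      exact_mod_cast hlin
    linarith [hB]
  -- assemble the global constant
  obtain ⟨i0, hi0⟩ : ∃ i : Fin n, True := ⟨⟨0, by omega⟩, trivial⟩
  set u : Fin n → ℝ := Pi.single i0 1 with hu
  have hune : u ≠ 0 := by
    intro h0
    have := congrFun h0 i0
    simp [hu] at this
  have hgu : 0 < g u := hgpos u hune
  refine ⟨e u / g u / 2, ?_⟩
  intro y
  have h2c : 2 * (e u / g u / 2) = e u / g u := by ring
  rw [h2c]
  by_cases hy : ∀ s : ℝ, s • u + y ≠ 0
  · have hkey := key2 u y hune hy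
    have hgy : Q y - (β y) ^ 2 = g y := rfl
    rw [hgy]
    field_simp
    linear_combination hkey
  · push_neg at hy
    obtain ⟨s, hs⟩ := hy
    have hyu : y = (-s) • u := by
      have : y = -(s • u) := by linear_combination (norm := module) hs
      rw [this]; module
    have he : e y = s ^ 2 * e u := by
      rw [hyu, QuadraticMap.map_smul, smul_eq_mul]; ring
    have hQy : Q y = s ^ 2 * Q u := by
      rw [hyu, QuadraticMap.map_smul, smul_eq_mul]; ring
    have hby : β y = -s * β u := by
      rw [hyu, map_smul, smul_eq_mul]
    have hgy : Q y - (β y) ^ 2 = s ^ 2 * g u := by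
      have hgu' : g u = Q u - (β u) ^ 2 := rfl
      rw [hQy, hby, hgu']; ring
    rw [he, hgy]
    field_simp
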